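/- Let T ∈ ℝ^{n×n} be diagonal with positive diagonal entries, let W ∈ ℝ^{m×n}, and suppose there exists a diagonal matrix Q ∈ ℝ^{n×n} with positive diagonal entries such that the matrix M = T − Q Wᵀ W Q⁻¹ is symmetric, has positive diagonal entries, and is strictly diagonally dominant, i.e., |M_{ii}| > Σ_{j≠i} |M_{ij}| for all i = 1, …, n. Then T − Wᵀ W is positive definite. -/

import Mathlib

open Matrix Finset

lemma dd_posdef_aux (n : ℕ) (M : Matrix (Fin n) (Fin n) ℝ) (hs : Mᵀ = M)
    (hdd : ∀ i, ∑ j ∈ Finset.univ.erase i, |M i j| < M i i) : M.PosDef := by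
  refine posDef_iff_dotProduct_mulVec.mpr ⟨hs, ?_⟩
  intro x hx
  have hsym : ∀ i j, M j i = M i j := fun i j => by conv_lhs => rw [← hs, transpose_apply]
  have hform : star x ⬝ᵥ (M *ᵥ x) = ∑ i, ∑ j, x i * (M i j * x j) := by
    simp [dotProduct, mulVec, Finset.mul_sum]
  rw [hform]
  have swap0 : ∀ (f : Fin n → Fin n → ℝ),
      ∑ i, ∑ j ∈ Finset.univ.erase i, f i j = ∑ j, ∑ i ∈ Finset.univ.erase j, f i j := by
    intro f
    have key : ∀ (g : Fin n → Fin n → ℝ), ∑ i, ∑ j ∈ Finset.univ.erase i, g i j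
        = ∑ i, ∑ j, if i ≠ j then g i j else 0 := by
      intro g
      refine Finset.sum_congr rfl fun i _ => ?_
      rw [← Finset.sum_filter]
      congr 1
      ext j
      simp [Finset.mem_erase, ne_comm]
    rw [key f, key (fun a b => f b a), Finset.sum_comm]
    refine Finset.sum_congr rfl fun j _ => Finset.sum_congr rfl fun i _ => ?_
    simp [ne_comm]
  have step1 : ∑ i, ∑ j, x i * (M i j * x j)
      = ∑ i, M i i * x i ^ 2 + ∑ i, ∑ j ∈ Finset.univ.erase i, x i * (M i j * x j) := by
    rw [← Finset.sum_add_distrib]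
    refine Finset.sum_congr rfl fun i _ => ?_
    rw [← Finset.add_sum_erase _ _ (Finset.mem_univ i)]
    ring_nf
  have step2 : ∑ i, ∑ j ∈ Finset.univ.erase i, (-(|M i j| * (x i ^ 2 + x j ^ 2) / 2))
      ≤ ∑ i, ∑ j ∈ Finset.univ.erase i, x i * (M i j * x j) := by
    refine Finset.sum_le_sum fun i _ => Finset.sum_le_sum fun j _ => ?_
    nlinarith [mul_nonneg (sub_nonneg.2 (le_abs_self (M i j))) (sq_nonneg (x i + x j)),
      mul_nonneg (sub_nonneg.2 (le_abs_self (M i j))) (sq_nonneg (x i - x j)),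
      mul_nonneg (by linarith [neg_abs_le (M i j)] : (0:ℝ) ≤ |M i j| + M i j) (sq_nonneg (x i + x j)),
      mul_nonneg (by linarith [neg_abs_le (M i j)] : (0:ℝ) ≤ |M i j| + M i j) (sq_nonneg (x i - x j))]
  have swap1 : ∑ i, ∑ j ∈ Finset.univ.erase i, |M i j| * x j ^ 2
      = ∑ i, (∑ j ∈ Finset.univ.erase i, |M i j|) * x i ^ 2 := by
    rw [swap0]
    refine Finset.sum_congr rfl fun i _ => ?_
    rw [Finset.sum_mul]
    refine Finset.sum_congr rfl fun j _ => ?_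
    rw [hsym]
  have expand : ∑ i, ∑ j ∈ Finset.univ.erase i, (-(|M i j| * (x i ^ 2 + x j ^ 2) / 2))
      = -∑ i, (∑ j ∈ Finset.univ.erase i, |M i j|) * x i ^ 2 := by
    have : ∀ i, ∑ j ∈ Finset.univ.erase i, (-(|M i j| * (x i ^ 2 + x j ^ 2) / 2))
        = -((∑ j ∈ Finset.univ.erase i, |M i j|) * x i ^ 2 / 2
            + (∑ j ∈ Finset.univ.erase i, |M i j| * x j ^ 2) / 2) := by
      intro i
      rw [Finset.sum_mul, Finset.sum_div, Finset.sum_div, ← Finset.sum_add_distrib,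
        ← Finset.sum_neg_distrib]
      refine Finset.sum_congr rfl fun j _ => ?_
      ring
    simp_rw [this]
    rw [Finset.sum_neg_distrib, Finset.sum_add_distrib]
    have h2 : ∑ i, (∑ j ∈ Finset.univ.erase i, |M i j| * x j ^ 2) / 2
        = (∑ i, (∑ j ∈ Finset.univ.erase i, |M i j|) * x i ^ 2) / 2 := by
      rw [← Finset.sum_div, swap1, Finset.sum_div]
    rw [h2, ← Finset.sum_div]
    ring
  have lower : ∑ i, (M i i - ∑ j ∈ Finset.univ.erase i, |M i j|) * x i ^ 2
      ≤ ∑ i, ∑ j, x i * (M i j * x j) := by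
    rw [step1]
    have : ∑ i, (M i i - ∑ j ∈ Finset.univ.erase i, |M i j|) * x i ^ 2
        = ∑ i, M i i * x i ^ 2 - ∑ i, (∑ j ∈ Finset.univ.erase i, |M i j|) * x i ^ 2 := by
      rw [← Finset.sum_sub_distrib]
      exact Finset.sum_congr rfl fun i _ => by ring
    rw [this]
    have := step2
    rw [expand] at this
    linarith
  have hpos : 0 < ∑ i, (M i i - ∑ j ∈ Finset.univ.erase i, |M i j|) * x i ^ 2 := by
    obtain ⟨k, hk⟩ := Function.ne_iff.1 hx
    refine Finset.sum_pos' (fun i _ => mul_nonneg (by linarith [hdd i]) (sq_nonneg _))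
      ⟨k, Finset.mem_univ k, ?_⟩
    have hxk : 0 < x k ^ 2 := by nlinarith [sq_nonneg (x k), sq_abs (x k), abs_pos.mpr hk]
    exact mul_pos (by linarith [hdd k]) hxk
  linarith

/-- If `T = diag(t) ≻ 0` and there is a positive diagonal `Q = diag(q)`
such that `M = T − Q Wᵀ W Q⁻¹` is symmetric with positive diagonal entries and
strictly diagonally dominant, then `T − Wᵀ W ≻ 0`. -/
theorem diagonally_dominant_similarity_implies_posdef
    (n m : ℕ) (t : Fin n → ℝ) (ht : ∀ i, 0 < t i)
    (W : Matrix (Fin m) (Fin n) ℝ)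
    (q : Fin n → ℝ) (hq : ∀ i, 0 < q i)
    (M : Matrix (Fin n) (Fin n) ℝ)
    (hM : M = Matrix.diagonal t -
      Matrix.diagonal q * Wᵀ * W * (Matrix.diagonal q)⁻¹)
    (hMsymm : M.IsSymm)
    (hMdiag : ∀ i, 0 < M i i)
    (hMdd : ∀ i, ∑ j ∈ Finset.univ.erase i, |M i j| < |M i i|) :
    (Matrix.diagonal t - Wᵀ * W).PosDef := by
  set S : Matrix (Fin n) (Fin n) ℝ := Wᵀ * W with hSdef
  have hS : ∀ i j, S j i = S i j := by
    intro i j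
    have : Sᵀ = S := by rw [hSdef, transpose_mul, transpose_transpose]
    conv_lhs => rw [← this, transpose_apply]
  have hqne : ∀ i, q i ≠ 0 := fun i => (hq i).ne'
  have hQinv : (Matrix.diagonal q)⁻¹ = Matrix.diagonal (fun i => (q i)⁻¹) := by
    refine Matrix.inv_eq_right_inv ?_
    rw [Matrix.diagonal_mul_diagonal]
    have : (fun i => q i * (q i)⁻¹) = fun _ => (1:ℝ) := by
      funext i; exact mul_inv_cancel₀ (hqne i)
    rw [this, Matrix.diagonal_one]
  have hMentry : ∀ i j, M i j = Matrix.diagonal t i j - q i * S i j * (q j)⁻¹ := by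
    intro i j
    rw [hM, Matrix.mul_assoc (Matrix.diagonal q) Wᵀ W, hQinv]
    simp only [Matrix.sub_apply, Matrix.diagonal_mul, Matrix.mul_diagonal, hSdef]
  have hAM : Matrix.diagonal t - Wᵀ * W = M := by
    ext i j
    rw [hMentry i j]
    rcases eq_or_ne i j with rfl | hij
    · have : q i * S i i * (q i)⁻¹ = S i i := by
        rw [mul_comm (q i) (S i i), mul_inv_cancel_right₀ (hqne i)]
      rw [this]
      simp [hSdef, Matrix.sub_apply]
    · have hsymm := hMsymm.apply i j
      rw [hMentry i j, hMentry j i] at hsymm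
      have hd0 : Matrix.diagonal t i j = 0 := Matrix.diagonal_apply_ne t hij
      have hd0' : Matrix.diagonal t j i = 0 := Matrix.diagonal_apply_ne t (Ne.symm hij)
      rw [hd0, hd0', hS i j] at hsymm
      -- hsymm : 0 - q j * S i j * (q i)⁻¹ = 0 - q i * S i j * (q j)⁻¹
      have h1 : q j * S i j * q j = q i * S i j * q i := by
        have h0 : q j * S i j / q i = q i * S i j / q j := by
          rw [div_eq_mul_inv, div_eq_mul_inv]
          linarith [hsymm]
        rw [div_eq_div_iff (hqne i) (hqne j)] at h0
        linarith [h0]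
      have h2 : (q i + q j) * ((q i - q j) * S i j) = 0 := by linear_combination -h1
      have h3 : (q i - q j) * S i j = 0 := by
        rcases mul_eq_zero.1 h2 with h | h
        · exact absurd h (add_pos (hq i) (hq j)).ne'
        · exact h
      have h4 : q i * S i j = q j * S i j := by linear_combination h3
      have : q i * S i j * (q j)⁻¹ = S i j := by
        rw [h4, mul_comm (q j) (S i j), mul_inv_cancel_right₀ (hqne j)]
      rw [this]
      simp [Matrix.sub_apply, hd0, hSdef]
  rw [hAM]
  exact dd_posdef_aux n M hMsymm.eq (fun i => by
    have := hMdd i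
    rwa [abs_of_pos (hMdiag i)] at this)
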